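/- arXiv:1304.4623 — 2 statements merged into one kernel-verified Lean document; each statement's English description precedes it below -/
import Mathlib

section
/- Let $p \ge 1$ be an integer and let $((X_{(l)}, Y_{(l)}))_{l \ge 1}$ be an i.i.d. sequence of pairs of real random variables (within one pair, $X_{(l)}$ and $Y_{(l)}$ may be dependent) with $E[X_{(1)}] = E[Y_{(1)}] = 0$, $E[|X_{(1)}|^{4p}] < \infty$ and $E[|Y_{(1)}|^{4p}] < \infty$. Then there exists a constant $C$, depending only on $p$, $E[|X_{(1)}|^{4p}]$ and $E[|Y_{(1)}|^{4p}]$ (in particular independent of the mesh, of $n$ and of $k$), such that for every mesh $\mathcal{D} = \{0 = t_0 < t_1 < \cdots < t_n = 1\}$ and every $1 \le k \le n$, writing $X_l = \sqrt{\Delta t_l}\,X_{(l)}$ and $Y_l = \sqrt{\Delta t_l}\,Y_{(l)}$, one has $E\big[\big|\sum_{1 \le l_1 < l_2 \le k} X_{l_1} Y_{l_2}\big|^{2p}\big] \le C\, t_k^{2p}$. -/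
open MeasureTheory ProbabilityTheory
open Finset

lemma young0 (u v : ℝ) (hu : 0 ≤ u) (hv : 0 ≤ v) (a b : ℕ) :
    u ^ a * v ^ b ≤ u ^ (a + b) + v ^ (a + b) := by
  rcases le_total u v with h | h
  · calc u ^ a * v ^ b ≤ v ^ a * v ^ b :=
        mul_le_mul_of_nonneg_right (pow_le_pow_left₀ hu h a) (pow_nonneg hv b)
    _ = v ^ (a + b) := (pow_add v a b).symm
    _ ≤ _ := le_add_of_nonneg_left (pow_nonneg hu (a+b))
  · calc u ^ a * v ^ b ≤ u ^ a * u ^ b :=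
        mul_le_mul_of_nonneg_left (pow_le_pow_left₀ hv h b) (pow_nonneg hu a)
    _ = u ^ (a + b) := (pow_add u a b).symm
    _ ≤ _ := le_add_of_nonneg_right (pow_nonneg hv (a+b))

lemma young2 (U V s δ : ℝ) (hU : 0 ≤ U) (hV : 0 ≤ V) (hs : 0 < s) (hδ : 0 < δ) (i j : ℕ) :
    U ^ i * V ^ j ≤ (δ ^ j / s ^ j) * U ^ (i + j) + ((1 / δ) ^ i * s ^ i) * V ^ (i + j) := by
  have hs' := hs.ne'
  have hδ' := hδ.ne'
  rcases le_total (V * s) (δ * U) with h | h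
  · have hV' : V ≤ δ * U / s := (le_div_iff₀ hs).2 h
    have h2 : V ^ j ≤ (δ * U / s) ^ j :=
      pow_le_pow_left₀ hV hV' j
    calc U ^ i * V ^ j ≤ U ^ i * (δ * U / s) ^ j :=
          mul_le_mul_of_nonneg_left h2 (pow_nonneg hU i)
    _ = (δ ^ j / s ^ j) * U ^ (i + j) := by
          rw [div_pow, mul_pow, pow_add]; ring
    _ ≤ _ := le_add_of_nonneg_right (by positivity)
  · have hU' : U ≤ V * s / δ := (le_div_iff₀ hδ).2 (by linarith [mul_comm U δ])
    have h2 : U ^ i ≤ (V * s / δ) ^ i := pow_le_pow_left₀ hU hU' i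
    calc U ^ i * V ^ j ≤ (V * s / δ) ^ i * V ^ j :=
          mul_le_mul_of_nonneg_right h2 (pow_nonneg hV j)
    _ = ((1 / δ) ^ i * s ^ i) * V ^ (i + j) := by
          rw [div_pow, mul_pow, pow_add, div_pow]; field_simp; ring
    _ ≤ _ := le_add_of_nonneg_left (by positivity)

lemma gap_pow (x y : ℝ) (hy : 0 ≤ y) (hxy : y ≤ x) (M : ℕ) :
    y ^ (M + 1) + x ^ M * (x - y) ≤ x ^ (M + 1) := by
  have h1 : y ^ (M + 1) ≤ y * x ^ M := by
    rw [pow_succ']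
    exact mul_le_mul_of_nonneg_left (pow_le_pow_left₀ hy hxy M) hy
  have h2 : x ^ (M + 1) = x ^ M * x := pow_succ x M
  nlinarith

lemma abs_pow_le_one_add (x : ℝ) (a c : ℕ) (hac : a ≤ c) : |x| ^ a ≤ 1 + |x| ^ c := by
  rcases le_total |x| 1 with h | h
  · have h1 : |x| ^ a ≤ 1 := pow_le_one₀ (abs_nonneg x) h
    have h2 : (0:ℝ) ≤ |x| ^ c := pow_nonneg (abs_nonneg x) c
    linarith
  · have h1 : |x| ^ a ≤ |x| ^ c := pow_le_pow_right₀ h hac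
    linarith

lemma pow_mul_pow_le (s d : ℝ) (hd : 0 ≤ d) (hds : d ≤ s) (N j : ℕ) (h2 : 2 ≤ j) (hj : j ≤ N) :
    s ^ (N - j) * d ^ j ≤ s ^ (N - 2) * d ^ 2 := by
  have hs : 0 ≤ s := hd.trans hds
  have h3 : d ^ j = d ^ (j - 2) * d ^ 2 := by rw [← pow_add]; congr 1; omega
  have h4 : d ^ (j - 2) ≤ s ^ (j - 2) := pow_le_pow_left₀ hd hds _
  calc s ^ (N - j) * d ^ j = s ^ (N - j) * d ^ (j - 2) * d ^ 2 := by rw [h3]; ring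
  _ ≤ s ^ (N - j) * s ^ (j - 2) * d ^ 2 := by
        have := mul_le_mul_of_nonneg_left h4 (pow_nonneg hs (N - j))
        exact mul_le_mul_of_nonneg_right this (pow_nonneg hd 2)
  _ = s ^ (N - 2) * d ^ 2 := by rw [← pow_add]; congr 2; omega


lemma young5 (U V s δ : ℝ) (hU : 0 ≤ U) (hV : 0 ≤ V) (hs : 0 ≤ s) (hδ : 0 < δ) (i j : ℕ) :
    U ^ i * V ^ j * s ^ j ≤ δ ^ j * U ^ (i + j) + (1 / δ) ^ i * (s ^ (i + j) * V ^ (i + j)) := by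
  rcases le_total (V * s) (δ * U) with h | h
  · have h1 : (V * s) ^ j ≤ (δ * U) ^ j := pow_le_pow_left₀ (mul_nonneg hV hs) h j
    calc U ^ i * V ^ j * s ^ j = U ^ i * (V * s) ^ j := by rw [mul_pow]; ring
    _ ≤ U ^ i * (δ * U) ^ j := mul_le_mul_of_nonneg_left h1 (pow_nonneg hU i)
    _ = δ ^ j * U ^ (i + j) := by rw [mul_pow, pow_add]; ring
    _ ≤ _ := le_add_of_nonneg_right (by positivity)
  · have hU' : U ≤ V * s / δ := (le_div_iff₀ hδ).2 (by linarith [mul_comm U δ])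
    have h1 : U ^ i ≤ (V * s / δ) ^ i := pow_le_pow_left₀ hU hU' i
    calc U ^ i * V ^ j * s ^ j ≤ (V * s / δ) ^ i * V ^ j * s ^ j :=
          mul_le_mul_of_nonneg_right
            (mul_le_mul_of_nonneg_right h1 (pow_nonneg hV j)) (pow_nonneg hs j)
    _ = (1 / δ) ^ i * (s ^ (i + j) * V ^ (i + j)) := by
          rw [div_pow, mul_pow, pow_add, pow_add, div_pow, one_pow]
          field_simp
    _ ≤ _ := le_add_of_nonneg_left (by positivity)

lemma indep_helper {Ω : Type} {mΩ : MeasurableSpace Ω} {P : Measure Ω}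
    {V : ℕ → Ω → ℝ × ℝ} (hmeas : ∀ l, Measurable (V l))
    (hV : iIndepFun V P)
    (k : ℕ) (F : (ℕ → ℝ × ℝ) → ℝ) (hF : Measurable F)
    (g : ℝ × ℝ → ℝ) (hg : Measurable g) :
    IndepFun (fun ω => F (fun l => if l ∈ Finset.Icc 1 k then V l ω else 0))
      (fun ω => g (V (k + 1) ω)) P := by
  have hd : Disjoint (Finset.Icc 1 k) ({k + 1} : Finset ℕ) := by
    simp [Finset.disjoint_singleton_right]
  have h1 := hV.indepFun_finset (Finset.Icc 1 k) {k + 1} hd hmeas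
  have hmem : (k + 1) ∈ ({k + 1} : Finset ℕ) := Finset.mem_singleton_self _
  set φ : ((i : (Finset.Icc 1 k : Finset ℕ)) → ℝ × ℝ) → ℝ :=
    fun v => F (fun l => if h : l ∈ Finset.Icc 1 k then v ⟨l, h⟩ else 0) with hφdef
  have hφ : Measurable φ := by
    apply hF.comp
    apply measurable_pi_lambda
    intro l
    by_cases h : l ∈ Finset.Icc 1 k
    · simp only [h, dif_pos]
      exact measurable_pi_apply _
    · simp only [h, dif_neg, not_false_iff]
      exact measurable_const
  set ψ : ((i : ({k + 1} : Finset ℕ)) → ℝ × ℝ) → ℝ :=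
    fun v => g (v ⟨k + 1, hmem⟩) with hψdef
  have hψ : Measurable ψ := hg.comp (measurable_pi_apply _)
  have h2 := h1.comp hφ hψ
  have e1 : (φ ∘ fun a (i : (Finset.Icc 1 k : Finset ℕ)) => V i a)
      = fun ω => F (fun l => if l ∈ Finset.Icc 1 k then V l ω else 0) := by
    funext ω
    simp only [Function.comp, hφdef]
    simp only [dite_eq_ite]
  have e2 : (ψ ∘ fun a (i : ({k + 1} : Finset ℕ)) => V i a) = fun ω => g (V (k + 1) ω) := rfl
  rwa [e1, e2] at h2


set_option maxHeartbeats 4000000 in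
/-- Second-level cross-term moment estimate: for an i.i.d. sequence of
pairs `(X (l), Y (l))` of centered real random variables with finite `4p`-th moments
`KX`, `KY`, there is a constant `C = C(p, KX, KY)` such that for every mesh
`0 = t 0 < ⋯ < t n = 1` and every `1 ≤ k ≤ n`, writing `X_l = √(Δt_l) X (l)` and
`Y_l = √(Δt_l) Y (l)`, one has
`E[|∑_{1 ≤ l1 < l2 ≤ k} X_{l1} Y_{l2}|^{2p}] ≤ C t_k^{2p}`. -/
theorem statement_1 (p : ℕ) (hp : 1 ≤ p) (KX KY : ℝ) :
    ∃ C : ℝ, ∀ (Ω : Type) (mΩ : MeasurableSpace Ω) (P : Measure Ω),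
      IsProbabilityMeasure P →
      ∀ X Y : ℕ → Ω → ℝ,
        (∀ l, Measurable (X l)) → (∀ l, Measurable (Y l)) →
        iIndepFun
          (fun l ω => (X l ω, Y l ω)) P →
        (∀ l, IdentDistrib (fun ω => (X l ω, Y l ω)) (fun ω => (X 1 ω, Y 1 ω)) P P) →
        (∫ ω, X 1 ω ∂P) = 0 →
        (∫ ω, Y 1 ω ∂P) = 0 →
        Integrable (fun ω => |X 1 ω| ^ (4 * p)) P →
        Integrable (fun ω => |Y 1 ω| ^ (4 * p)) P →
        (∫ ω, |X 1 ω| ^ (4 * p) ∂P) = KX →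
        (∫ ω, |Y 1 ω| ^ (4 * p) ∂P) = KY →
        ∀ (n : ℕ) (t : ℕ → ℝ),
          0 < n → t 0 = 0 → t n = 1 →
          (∀ i, i < n → t i < t (i + 1)) →
          ∀ k, 1 ≤ k → k ≤ n →
            (∫ ω, |∑ l2 ∈ Finset.Icc 1 k, ∑ l1 ∈ Finset.Ico 1 l2,
                (Real.sqrt (t l1 - t (l1 - 1)) * X l1 ω) *
                  (Real.sqrt (t l2 - t (l2 - 1)) * Y l2 ω)| ^ (2 * p) ∂P)
              ≤ C * t k ^ (2 * p) := by
  classical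
  obtain ⟨B, hB1, hBX, hBY⟩ : ∃ B : ℝ, 1 ≤ B ∧ 1 + KX ≤ B ∧ 1 + KY ≤ B := by
    refine ⟨1 + |KX| + |KY|, ?_, ?_, ?_⟩ <;>
      [skip; skip; skip] <;>
      · have h1 := le_abs_self KX
        have h2 := le_abs_self KY
        have h3 := abs_nonneg KX
        have h4 := abs_nonneg KY
        linarith
  have hB0 : (0:ℝ) < B := lt_of_lt_of_le one_pos hB1
  have h4p : (1:ℝ) ≤ 4 ^ p := one_le_pow₀ (by norm_num)
  have h4p0 : (0:ℝ) < 4 ^ p := lt_of_lt_of_le one_pos h4p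
  obtain ⟨δ, hδ0, hδ1, hδQ⟩ : ∃ δ : ℝ, 0 < δ ∧ δ ≤ 1 ∧ 4 ^ p * B * δ ^ 2 ≤ 1 / 2 := by
    have hQ0 : (0:ℝ) < 4 ^ p * B := by nlinarith
    refine ⟨min 1 (1 / (2 * (4 ^ p * B))), lt_min one_pos (div_pos one_pos (by nlinarith)),
      min_le_left _ _, ?_⟩
    have h1 : min 1 (1 / (2 * (4 ^ p * B))) ≤ 1 / (2 * (4 ^ p * B)) := min_le_right _ _
    have h2 : 0 < min 1 (1 / (2 * (4 ^ p * B))) :=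
      lt_min one_pos (div_pos one_pos (by nlinarith))
    have h3 : min 1 (1 / (2 * (4 ^ p * B))) ≤ 1 := min_le_left _ _
    have h4 : (4 ^ p * B) * (1 / (2 * (4 ^ p * B))) = 1 / 2 := by
      field_simp
    nlinarith
  have hδinv : (1:ℝ) ≤ 1 / δ := one_le_one_div hδ0 hδ1
  obtain ⟨D, hD1, hDbd⟩ : ∃ D : ℝ, 1 ≤ D ∧ ∀ i, i ≤ 2 * p - 2 → (1 / δ) ^ i ≤ D :=
    ⟨(1 / δ) ^ (2 * p - 2), one_le_pow₀ hδinv, fun i hi => pow_le_pow_right₀ hδinv hi⟩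
  have hD0 : (0:ℝ) < D := lt_of_lt_of_le one_pos hD1
  obtain ⟨C', hC'B, hC'0, hkey1⟩ :
      ∃ C' : ℝ, B ≤ C' ∧ 0 < C' ∧ 4 ^ p * (B * (δ ^ 2 * C' + D)) ≤ C' := by
    have hBD : (0:ℝ) < 4 ^ p * B * D := mul_pos (mul_pos h4p0 hB0) hD0
    refine ⟨2 * (4 ^ p * B * D) + B, by nlinarith, by nlinarith, ?_⟩
    have hC'0 : (0:ℝ) < 2 * (4 ^ p * B * D) + B := by nlinarith
    have e1 : 4 ^ p * B * δ ^ 2 * (2 * (4 ^ p * B * D) + B) ≤ (1/2) * (2 * (4 ^ p * B * D) + B) :=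
      mul_le_mul_of_nonneg_right hδQ hC'0.le
    nlinarith
  obtain ⟨C, hC0, hkey2⟩ : ∃ C : ℝ, 0 < C ∧ 4 ^ p * (B * (δ ^ 2 * C + D * C')) ≤ C := by
    have hBDC : (0:ℝ) < 4 ^ p * B * D * C' := mul_pos (mul_pos (mul_pos h4p0 hB0) hD0) hC'0
    refine ⟨2 * (4 ^ p * B * D * C') + 1, by nlinarith, ?_⟩
    have hC0 : (0:ℝ) < 2 * (4 ^ p * B * D * C') + 1 := by nlinarith
    have e1 : 4 ^ p * B * δ ^ 2 * (2 * (4 ^ p * B * D * C') + 1)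
        ≤ (1/2) * (2 * (4 ^ p * B * D * C') + 1) :=
      mul_le_mul_of_nonneg_right hδQ hC0.le
    nlinarith
  refine ⟨C, ?_⟩
  intro Ω mΩ P hPprob X Y hX hY hindep hid hXmean hYmean hXint hYint hKX hKY
    n t hn ht0 htn htlt k hk1 hkn
  set m : ℕ := 2 * p with hm
  have hm2 : 2 ≤ m := by omega
  have hmev : Even m := by rw [hm]; exact even_two_mul p
  -- mesh facts
  have tmono : ∀ i j : ℕ, i ≤ j → j ≤ n → t i ≤ t j := by
    intro i j hij hjn
    induction j with
    | zero => have : i = 0 := by omega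
              simp [this]
    | succ j ih =>
      rcases Nat.eq_or_lt_of_le hij with h | h
      · simp [h]
      · exact le_trans (ih (by omega) (by omega)) (le_of_lt (htlt j (by omega)))
  have tnn : ∀ i, i ≤ n → 0 ≤ t i := fun i hi => by
    have := tmono 0 i (Nat.zero_le _) hi; rw [ht0] at this; exact this
  have tpos : ∀ k', 1 ≤ k' → k' ≤ n → 0 < t k' := by
    intro k' h1 h2
    have ha := htlt 0 (by omega)
    have hb := tmono 1 k' h1 h2
    rw [ht0] at ha; linarith
  set d : ℕ → ℝ := fun l => Real.sqrt (t l - t (l - 1)) with hddef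
  have hdnn : ∀ l, 0 ≤ d l := fun l => Real.sqrt_nonneg _
  have hd2 : ∀ l, 1 ≤ l → l ≤ n → d l ^ 2 = t l - t (l - 1) := fun l h1 h2 => by
    rw [hddef]
    exact Real.sq_sqrt (by
      have := tmono (l - 1) l (Nat.sub_le l 1) h2; linarith)
  -- random variables
  set V : ℕ → Ω → ℝ × ℝ := fun l ω => (X l ω, Y l ω) with hVdef
  have hVmeas : ∀ l, Measurable (V l) := fun l => (hX l).prodMk (hY l)
  set A : ℕ → Ω → ℝ := fun k' ω => ∑ l ∈ Finset.Icc 1 k', d l * X l ω with hAdef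
  set S : ℕ → Ω → ℝ := fun k' ω => ∑ l2 ∈ Finset.Icc 1 k',
      (∑ l1 ∈ Finset.Ico 1 l2, d l1 * X l1 ω) * (d l2 * Y l2 ω) with hSdef
  have hAme : ∀ k', Measurable (A k') := fun k' =>
    Finset.measurable_sum _ fun l _ => (hX l).const_mul _
  have hSme : ∀ k', Measurable (S k') := fun k' =>
    Finset.measurable_sum _ fun l2 _ =>
      (Finset.measurable_sum _ fun l1 _ => (hX l1).const_mul _).mul ((hY l2).const_mul _)
  -- moment facts
  have momX : ∀ j, j ≤ 4 * p →
      Integrable (fun ω => X 1 ω ^ j) P ∧ |∫ ω, X 1 ω ^ j ∂P| ≤ B := by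
    intro j hj
    have hdom : Integrable (fun ω => 1 + |X 1 ω| ^ (4 * p)) P :=
      (integrable_const 1).add hXint
    have hbd : ∀ ω, ‖X 1 ω ^ j‖ ≤ 1 + |X 1 ω| ^ (4 * p) := fun ω => by
      rw [Real.norm_eq_abs, abs_pow]
      exact abs_pow_le_one_add _ _ _ hj
    have hint : Integrable (fun ω => X 1 ω ^ j) P :=
      Integrable.mono' hdom ((hX 1).pow_const j).aestronglyMeasurable
        (Filter.Eventually.of_forall hbd)
    refine ⟨hint, ?_⟩
    calc |∫ ω, X 1 ω ^ j ∂P| ≤ ∫ ω, ‖X 1 ω ^ j‖ ∂P := by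
          rw [← Real.norm_eq_abs]; exact norm_integral_le_integral_norm _
    _ ≤ ∫ ω, (1 + |X 1 ω| ^ (4 * p)) ∂P :=
          integral_mono hint.norm hdom hbd
    _ = 1 + KX := by
          rw [integral_add (integrable_const 1) hXint, hKX]
          simp
    _ ≤ B := hBX
  have momY : ∀ j, j ≤ 4 * p →
      Integrable (fun ω => Y 1 ω ^ j) P ∧ |∫ ω, Y 1 ω ^ j ∂P| ≤ B := by
    intro j hj
    have hdom : Integrable (fun ω => 1 + |Y 1 ω| ^ (4 * p)) P :=
      (integrable_const 1).add hYint
    have hbd : ∀ ω, ‖Y 1 ω ^ j‖ ≤ 1 + |Y 1 ω| ^ (4 * p) := fun ω => by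
      rw [Real.norm_eq_abs, abs_pow]
      exact abs_pow_le_one_add _ _ _ hj
    have hint : Integrable (fun ω => Y 1 ω ^ j) P :=
      Integrable.mono' hdom ((hY 1).pow_const j).aestronglyMeasurable
        (Filter.Eventually.of_forall hbd)
    refine ⟨hint, ?_⟩
    calc |∫ ω, Y 1 ω ^ j ∂P| ≤ ∫ ω, ‖Y 1 ω ^ j‖ ∂P := by
          rw [← Real.norm_eq_abs]; exact norm_integral_le_integral_norm _
    _ ≤ ∫ ω, (1 + |Y 1 ω| ^ (4 * p)) ∂P := integral_mono hint.norm hdom hbd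
    _ = 1 + KY := by
          rw [integral_add (integrable_const 1) hYint, hKY]
          simp
    _ ≤ B := hBY
  have idX : ∀ l j, IdentDistrib (fun ω => X l ω ^ j) (fun ω => X 1 ω ^ j) P P :=
    fun l j => (hid l).comp (measurable_fst.pow_const j)
  have idY : ∀ l j, IdentDistrib (fun ω => Y l ω ^ j) (fun ω => Y 1 ω ^ j) P P :=
    fun l j => (hid l).comp (measurable_snd.pow_const j)
  have intXl : ∀ l j, j ≤ 4 * p → Integrable (fun ω => X l ω ^ j) P :=
    fun l j hj => ((idX l j).integrable_iff).2 (momX j hj).1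
  have intYl : ∀ l j, j ≤ 4 * p → Integrable (fun ω => Y l ω ^ j) P :=
    fun l j hj => ((idY l j).integrable_iff).2 (momY j hj).1
  have eqXl : ∀ l j, ∫ ω, X l ω ^ j ∂P = ∫ ω, X 1 ω ^ j ∂P := fun l j => (idX l j).integral_eq
  have eqYl : ∀ l j, ∫ ω, Y l ω ^ j ∂P = ∫ ω, Y 1 ω ^ j ∂P := fun l j => (idY l j).integral_eq
  -- independence
  have hindA : ∀ (k' i j : ℕ),
      IndepFun (fun ω => A k' ω ^ i) (fun ω => (d (k' + 1) * X (k' + 1) ω) ^ j) P := by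
    intro k' i j
    have hFm : Measurable (fun u : ℕ → ℝ × ℝ => (∑ l ∈ Finset.Icc 1 k', d l * (u l).1) ^ i) :=
      (Finset.measurable_sum _ fun l _ =>
        ((measurable_pi_apply l).fst.const_mul _)).pow_const i
    have hgm : Measurable (fun v : ℝ × ℝ => (d (k' + 1) * v.1) ^ j) :=
      (measurable_fst.const_mul _).pow_const j
    have h := indep_helper hVmeas hindep k' _ hFm _ hgm
    have e1 : (fun ω => (∑ l ∈ Finset.Icc 1 k',
        d l * ((if l ∈ Finset.Icc 1 k' then V l ω else 0)).1) ^ i)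
        = fun ω => A k' ω ^ i := by
      funext ω
      congr 1
      refine Finset.sum_congr rfl fun l hl => ?_
      rw [if_pos hl]
    rw [e1] at h
    exact h
  have hindS : ∀ (k' i j : ℕ),
      IndepFun (fun ω => S k' ω ^ i * A k' ω ^ j)
        (fun ω => (d (k' + 1) * Y (k' + 1) ω) ^ j) P := by
    intro k' i j
    have hFm : Measurable (fun u : ℕ → ℝ × ℝ =>
        (∑ l2 ∈ Finset.Icc 1 k', (∑ l1 ∈ Finset.Ico 1 l2, d l1 * (u l1).1)
          * (d l2 * (u l2).2)) ^ i * (∑ l ∈ Finset.Icc 1 k', d l * (u l).1) ^ j) := by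
      apply Measurable.mul
      · exact (Finset.measurable_sum _ fun l2 _ =>
          ((Finset.measurable_sum _ fun l1 _ =>
            ((measurable_pi_apply l1).fst.const_mul _)).mul
            ((measurable_pi_apply l2).snd.const_mul _))).pow_const i
      · exact (Finset.measurable_sum _ fun l _ =>
          ((measurable_pi_apply l).fst.const_mul _)).pow_const j
    have hgm : Measurable (fun v : ℝ × ℝ => (d (k' + 1) * v.2) ^ j) :=
      (measurable_snd.const_mul _).pow_const j
    have h := indep_helper hVmeas hindep k' _ hFm _ hgm
    have e1 : (fun ω => (∑ l2 ∈ Finset.Icc 1 k',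
          (∑ l1 ∈ Finset.Ico 1 l2, d l1 * ((if l1 ∈ Finset.Icc 1 k' then V l1 ω else 0)).1)
            * (d l2 * ((if l2 ∈ Finset.Icc 1 k' then V l2 ω else 0)).2)) ^ i
          * (∑ l ∈ Finset.Icc 1 k', d l * ((if l ∈ Finset.Icc 1 k' then V l ω else 0)).1) ^ j)
        = fun ω => S k' ω ^ i * A k' ω ^ j := by
      funext ω
      congr 1
      · congr 1
        refine Finset.sum_congr rfl fun l2 hl2 => ?_
        rw [if_pos hl2]
        congr 1
        refine Finset.sum_congr rfl fun l1 hl1 => ?_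
        have hl1' : l1 ∈ Finset.Icc 1 k' := by
          rw [Finset.mem_Icc]
          rw [Finset.mem_Ico] at hl1
          rw [Finset.mem_Icc] at hl2
          omega
        rw [if_pos hl1']
      · congr 1
        refine Finset.sum_congr rfl fun l hl => ?_
        rw [if_pos hl]
    rw [e1] at h
    exact h
  -- moment bound for A
  have PA : ∀ k', 1 ≤ k' → k' ≤ n →
      Integrable (fun ω => A k' ω ^ m) P ∧ ∫ ω, A k' ω ^ m ∂P ≤ C' * t k' ^ p := by
    intro k' hk'
    induction k', hk' using Nat.le_induction with
    | base =>
      intro h1n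
      have hA1 : ∀ ω, A 1 ω = d 1 * X 1 ω := by
        intro ω; simp [hAdef]
      have he : (fun ω => A 1 ω ^ m) = fun ω => d 1 ^ m * X 1 ω ^ m := by
        funext ω; rw [hA1, mul_pow]
      have hXm := intXl 1 m (by omega)
      constructor
      · rw [he]; exact hXm.const_mul _
      · rw [he, integral_const_mul]
        have hd1 : d 1 ^ m = t 1 ^ p := by
          rw [hm, pow_mul, hd2 1 le_rfl (by omega)]
          simp [ht0]
        have hXb : ∫ ω, X 1 ω ^ m ∂P ≤ B := le_trans (le_abs_self _) (momX m (by omega)).2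
        have ht1 : 0 ≤ t 1 ^ p := pow_nonneg (tnn 1 (by omega)) p
        calc d 1 ^ m * ∫ ω, X 1 ω ^ m ∂P = t 1 ^ p * ∫ ω, X 1 ω ^ m ∂P := by rw [hd1]
        _ ≤ t 1 ^ p * B := by
              apply mul_le_mul_of_nonneg_left hXb ht1
        _ ≤ t 1 ^ p * C' := mul_le_mul_of_nonneg_left hC'B ht1
        _ = C' * t 1 ^ p := mul_comm _ _
    | succ k' hk' ih =>
      intro hk1n
      have hk'n : k' ≤ n := by omega
      obtain ⟨ihInt, ihBd⟩ := ih hk'n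
      set dd : ℝ := d (k' + 1) with hissdd
      set s : ℝ := Real.sqrt (t k') with hs_def
      set s' : ℝ := Real.sqrt (t (k' + 1)) with hs'_def
      have hs0 : 0 < s := Real.sqrt_pos.2 (tpos k' hk' hk'n)
      have hs2 : s ^ 2 = t k' := Real.sq_sqrt (tnn k' hk'n)
      have hs'2 : s' ^ 2 = t (k' + 1) := Real.sq_sqrt (tnn _ hk1n)
      have htm : t k' ≤ t (k' + 1) := tmono k' (k' + 1) (by omega) hk1n
      have hΔ : dd ^ 2 = t (k' + 1) - t k' := by
        have := hd2 (k' + 1) (by omega) hk1n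
        simpa using this
      have hΔnn : 0 ≤ t (k' + 1) - t k' := by linarith
      have hss' : s ≤ s' := Real.sqrt_le_sqrt htm
      have hdd' : dd ≤ s' := by
        have h1 : t (k' + 1) - t k' ≤ t (k' + 1) := by
          have := tnn k' hk'n; linarith
        have h2 : dd = Real.sqrt (t (k' + 1) - t k') := by
          rw [hissdd, hddef]; simp
        rw [h2]; exact Real.sqrt_le_sqrt h1
      have hddnn : 0 ≤ dd := hdnn _
      -- recursion and expansion
      have hrec : ∀ ω, A (k' + 1) ω = A k' ω + dd * X (k' + 1) ω := by
        intro ω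
        rw [hAdef]
        exact Finset.sum_Icc_succ_top (by omega) _
      have hexp : ∀ ω, A (k' + 1) ω ^ m = ∑ i ∈ Finset.range (m + 1),
          A k' ω ^ i * (dd * X (k' + 1) ω) ^ (m - i) * ((m.choose i : ℕ) : ℝ) := by
        intro ω; rw [hrec ω, add_pow]
      -- per-term facts
      have hGint : ∀ j, j ≤ m → Integrable (fun ω => (dd * X (k' + 1) ω) ^ j) P := by
        intro j hj
        have he : (fun ω => (dd * X (k' + 1) ω) ^ j) = fun ω => dd ^ j * X (k' + 1) ω ^ j := by
          funext ω; rw [mul_pow]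
        rw [he]; exact (intXl (k' + 1) j (by omega)).const_mul _
      have hGval : ∀ j, ∫ ω, (dd * X (k' + 1) ω) ^ j ∂P = dd ^ j * ∫ ω, X 1 ω ^ j ∂P := by
        intro j
        have he : (fun ω => (dd * X (k' + 1) ω) ^ j) = fun ω => dd ^ j * X (k' + 1) ω ^ j := by
          funext ω; rw [mul_pow]
        rw [he, integral_const_mul, eqXl]
      have hHint : ∀ i, i ≤ m → Integrable (fun ω => A k' ω ^ i) P := by
        intro i hi
        refine Integrable.mono' ((integrable_const 1).add ihInt)
          ((hAme k').pow_const i).aestronglyMeasurable (Filter.Eventually.of_forall fun ω => ?_)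
        rw [Real.norm_eq_abs, abs_pow]
        calc |A k' ω| ^ i ≤ 1 + |A k' ω| ^ m := abs_pow_le_one_add _ _ _ hi
        _ = 1 + A k' ω ^ m := by rw [hmev.pow_abs]
      have hHGint : ∀ i, i ≤ m →
          Integrable (fun ω => A k' ω ^ i * (dd * X (k' + 1) ω) ^ (m - i)) P := by
        intro i hi
        exact (hindA k' i (m - i)).integrable_mul (hHint i hi) (hGint (m - i) (by omega))
      have hfac : ∀ i, ∫ ω, A k' ω ^ i * (dd * X (k' + 1) ω) ^ (m - i) ∂P
          = (∫ ω, A k' ω ^ i ∂P) * (dd ^ (m - i) * ∫ ω, X 1 ω ^ (m - i) ∂P) := by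
        intro i
        rw [← hGval (m - i)]
        exact (hindA k' i (m - i)).integral_fun_mul_eq_mul_integral
          ((hAme k').pow_const i).aestronglyMeasurable
          (((hX (k' + 1)).const_mul _).pow_const _).aestronglyMeasurable
      -- the split of the integral
      have hsplit : ∫ ω, A (k' + 1) ω ^ m ∂P = ∑ i ∈ Finset.range (m + 1),
          (∫ ω, A k' ω ^ i ∂P) * (dd ^ (m - i) * ∫ ω, X 1 ω ^ (m - i) ∂P)
            * ((m.choose i : ℕ) : ℝ) := by
        calc ∫ ω, A (k' + 1) ω ^ m ∂P
            = ∫ ω, ∑ i ∈ Finset.range (m + 1),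
              A k' ω ^ i * (dd * X (k' + 1) ω) ^ (m - i) * ((m.choose i : ℕ) : ℝ) ∂P :=
              integral_congr_ae (Filter.Eventually.of_forall hexp)
        _ = ∑ i ∈ Finset.range (m + 1),
              ∫ ω, A k' ω ^ i * (dd * X (k' + 1) ω) ^ (m - i) * ((m.choose i : ℕ) : ℝ) ∂P :=
              integral_finset_sum _ (fun i hi =>
                (hHGint i (by simp at hi; omega)).mul_const _)
        _ = ∑ i ∈ Finset.range (m + 1),
              (∫ ω, A k' ω ^ i * (dd * X (k' + 1) ω) ^ (m - i) ∂P) * ((m.choose i : ℕ) : ℝ) :=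
              Finset.sum_congr rfl fun i _ => integral_mul_const _ _
        _ = _ := Finset.sum_congr rfl fun i _ => by rw [hfac i]
      -- bound the small terms
      have hH_bd : ∀ i j, i + j = m → 2 ≤ j →
          |∫ ω, A k' ω ^ i ∂P| ≤ (δ ^ 2 * C' + D) * s ^ i := by
        intro i j hij hj2
        have hi_le : i ≤ m := by omega
        have h7 : t k' ^ p = s ^ m := by
          rw [← hs2, ← pow_mul]
        have hptw : ∀ ω, |A k' ω ^ i| * s ^ j
            ≤ δ ^ j * A k' ω ^ m + (1 / δ) ^ i * s ^ m := by
          intro ω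
          have hy := young5 |A k' ω| 1 s δ (abs_nonneg _) zero_le_one hs0.le hδ0 i j
          simp only [one_pow, mul_one] at hy
          rw [hij] at hy
          rw [abs_pow]
          calc |A k' ω| ^ i * s ^ j ≤ δ ^ j * |A k' ω| ^ m + (1 / δ) ^ i * s ^ m := hy
          _ = δ ^ j * A k' ω ^ m + (1 / δ) ^ i * s ^ m := by rw [hmev.pow_abs]
        have hdomI : Integrable (fun ω => δ ^ j * A k' ω ^ m + (1 / δ) ^ i * s ^ m) P :=
          (ihInt.const_mul _).add (integrable_const _)
        have h2 : (∫ ω, |A k' ω ^ i| ∂P) * s ^ j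
            ≤ δ ^ j * ∫ ω, A k' ω ^ m ∂P + (1 / δ) ^ i * s ^ m := by
          rw [← integral_mul_const]
          calc ∫ ω, |A k' ω ^ i| * s ^ j ∂P
              ≤ ∫ ω, (δ ^ j * A k' ω ^ m + (1 / δ) ^ i * s ^ m) ∂P :=
                integral_mono ((hHint i hi_le).abs.mul_const _) hdomI hptw
          _ = δ ^ j * ∫ ω, A k' ω ^ m ∂P + (1 / δ) ^ i * s ^ m := by
                rw [integral_add (ihInt.const_mul _) (integrable_const _), integral_const_mul,
                  integral_const]
                simp
        have hA1 : δ ^ j ≤ δ ^ 2 := pow_le_pow_of_le_one hδ0.le hδ1 hj2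
        have hA2 : (1 / δ) ^ i ≤ D := hDbd i (by omega)
        have hsm : (0:ℝ) ≤ s ^ m := pow_nonneg hs0.le m
        have h4 : (∫ ω, |A k' ω ^ i| ∂P) * s ^ j ≤ (δ ^ 2 * C' + D) * s ^ m := by
          have h3 : δ ^ j * ∫ ω, A k' ω ^ m ∂P ≤ δ ^ j * (C' * s ^ m) := by
            rw [← h7]
            exact mul_le_mul_of_nonneg_left ihBd (pow_nonneg hδ0.le j)
          have b1 : δ ^ j * (C' * s ^ m) ≤ δ ^ 2 * (C' * s ^ m) :=
            mul_le_mul_of_nonneg_right hA1 (mul_nonneg hC'0.le hsm)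
          have b2 : (1 / δ) ^ i * s ^ m ≤ D * s ^ m := mul_le_mul_of_nonneg_right hA2 hsm
          have e : (δ ^ 2 * C' + D) * s ^ m = δ ^ 2 * (C' * s ^ m) + D * s ^ m := by ring
          rw [e]
          linarith
        have h5 : s ^ m = s ^ i * s ^ j := by rw [← pow_add]; congr 1; omega
        have h6 : (∫ ω, |A k' ω ^ i| ∂P) ≤ (δ ^ 2 * C' + D) * s ^ i := by
          have hsj : 0 < s ^ j := pow_pos hs0 j
          rw [h5, ← mul_assoc] at h4
          exact le_of_mul_le_mul_right h4 hsj
        calc |∫ ω, A k' ω ^ i ∂P| ≤ ∫ ω, |A k' ω ^ i| ∂P := by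
              rw [← Real.norm_eq_abs]
              exact le_trans (norm_integral_le_integral_norm _) (by simp [Real.norm_eq_abs])
        _ ≤ _ := h6
      -- X-moment bound
      have hXb : ∀ j, j ≤ m → |∫ ω, X 1 ω ^ j ∂P| ≤ B := fun j hj => (momX j (by omega)).2
      -- small term bound
      have hsmall : ∀ i, i ≤ m - 2 →
          |(∫ ω, A k' ω ^ i ∂P) * (dd ^ (m - i) * ∫ ω, X 1 ω ^ (m - i) ∂P)
            * ((m.choose i : ℕ) : ℝ)|
          ≤ ((m.choose i : ℕ) : ℝ) * ((δ ^ 2 * C' + D) * B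
              * (t (k' + 1) ^ (p - 1) * (t (k' + 1) - t k'))) := by
        intro i hi
        set j : ℕ := m - i with hj_def
        have hij : i + j = m := by omega
        have hj2 : 2 ≤ j := by omega
        have e1 : |(∫ ω, A k' ω ^ i ∂P) * (dd ^ j * ∫ ω, X 1 ω ^ j ∂P) * ((m.choose i : ℕ) : ℝ)|
            = |∫ ω, A k' ω ^ i ∂P| * (dd ^ j * |∫ ω, X 1 ω ^ j ∂P|) * ((m.choose i : ℕ) : ℝ) := by
          rw [abs_mul, abs_mul, abs_mul, abs_pow, abs_of_nonneg hddnn, Nat.abs_cast]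
        rw [e1]
        have hb1 : |∫ ω, A k' ω ^ i ∂P| * (dd ^ j * |∫ ω, X 1 ω ^ j ∂P|)
            ≤ ((δ ^ 2 * C' + D) * s ^ i) * (dd ^ j * B) := by
          apply mul_le_mul (hH_bd i j hij hj2)
          · exact mul_le_mul_of_nonneg_left (hXb j (by omega)) (pow_nonneg hddnn j)
          · positivity
          · positivity
        have hb2 : s ^ i * dd ^ j ≤ t (k' + 1) ^ (p - 1) * (t (k' + 1) - t k') := by
          have hs'nn : 0 ≤ s' := Real.sqrt_nonneg _
          have h1 : s ^ i ≤ s' ^ i := pow_le_pow_left₀ hs0.le hss' i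
          have h2 : s' ^ i * dd ^ j ≤ s' ^ (m - 2) * dd ^ 2 := by
            have := pow_mul_pow_le s' dd hddnn hdd' m j hj2 (by omega)
            rw [show m - j = i from by omega] at this
            exact this
          have h3 : s' ^ (m - 2) * dd ^ 2 = t (k' + 1) ^ (p - 1) * (t (k' + 1) - t k') := by
            rw [show m - 2 = 2 * (p - 1) from by omega, pow_mul, hs'2, hΔ]
          calc s ^ i * dd ^ j ≤ s' ^ i * dd ^ j :=
                mul_le_mul_of_nonneg_right h1 (pow_nonneg hddnn j)
          _ ≤ s' ^ (m - 2) * dd ^ 2 := h2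
          _ = _ := h3
        calc |∫ ω, A k' ω ^ i ∂P| * (dd ^ j * |∫ ω, X 1 ω ^ j ∂P|) * ((m.choose i : ℕ) : ℝ)
            ≤ ((δ ^ 2 * C' + D) * s ^ i) * (dd ^ j * B) * ((m.choose i : ℕ) : ℝ) :=
              mul_le_mul_of_nonneg_right hb1 (by positivity)
        _ = ((m.choose i : ℕ) : ℝ) * ((δ ^ 2 * C' + D) * B * (s ^ i * dd ^ j)) := by ring
        _ ≤ ((m.choose i : ℕ) : ℝ) * ((δ ^ 2 * C' + D) * B
              * (t (k' + 1) ^ (p - 1) * (t (k' + 1) - t k'))) := by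
              apply mul_le_mul_of_nonneg_left _ (by positivity)
              apply mul_le_mul_of_nonneg_left hb2 (by positivity)
      -- assemble
      obtain ⟨q, hq⟩ : ∃ q, m = q + 2 := ⟨m - 2, by omega⟩
      have hIntNew : Integrable (fun ω => A (k' + 1) ω ^ m) P := by
        have he : (fun ω => A (k' + 1) ω ^ m) = fun ω => ∑ i ∈ Finset.range (m + 1),
            A k' ω ^ i * (dd * X (k' + 1) ω) ^ (m - i) * ((m.choose i : ℕ) : ℝ) := funext hexp
        rw [he]
        exact integrable_finset_sum _ fun i hi =>
          (hHGint i (by simp at hi; omega)).mul_const _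
      refine ⟨hIntNew, ?_⟩
      rw [hsplit, show m + 1 = q + 1 + 1 + 1 from by omega, Finset.sum_range_succ,
        Finset.sum_range_succ]
      beta_reduce
      have hmid : (∫ ω, A k' ω ^ (q + 1) ∂P)
          * (dd ^ (m - (q + 1)) * ∫ ω, X 1 ω ^ (m - (q + 1)) ∂P)
          * ((m.choose (q + 1) : ℕ) : ℝ) = 0 := by
        rw [show m - (q + 1) = 1 from by omega]
        simp [hXmean]
      have htop : (∫ ω, A k' ω ^ (q + 1 + 1) ∂P)
          * (dd ^ (m - (q + 1 + 1)) * ∫ ω, X 1 ω ^ (m - (q + 1 + 1)) ∂P)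
          * ((m.choose (q + 1 + 1) : ℕ) : ℝ) ≤ C' * t k' ^ p := by
        rw [show m - (q + 1 + 1) = 0 from by omega, show q + 1 + 1 = m from by omega,
          Nat.choose_self]
        have hX0 : ∫ ω, X 1 ω ^ 0 ∂P = 1 := by simp
        rw [hX0]
        simpa using ihBd
      have hEnn : (0:ℝ) ≤ t (k' + 1) ^ (p - 1) * (t (k' + 1) - t k') :=
        mul_nonneg (pow_nonneg (tnn _ hk1n) _) hΔnn
      have hsum_small : (∑ i ∈ Finset.range (q + 1),
          (∫ ω, A k' ω ^ i ∂P) * (dd ^ (m - i) * ∫ ω, X 1 ω ^ (m - i) ∂P)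
            * ((m.choose i : ℕ) : ℝ))
          ≤ C' * (t (k' + 1) ^ (p - 1) * (t (k' + 1) - t k')) := by
        have h1 : ∀ i ∈ Finset.range (q + 1),
            (∫ ω, A k' ω ^ i ∂P) * (dd ^ (m - i) * ∫ ω, X 1 ω ^ (m - i) ∂P)
              * ((m.choose i : ℕ) : ℝ)
            ≤ ((m.choose i : ℕ) : ℝ) * ((δ ^ 2 * C' + D) * B
                * (t (k' + 1) ^ (p - 1) * (t (k' + 1) - t k'))) := fun i hi =>
          le_trans (le_abs_self _) (hsmall i (by simp at hi; omega))
        have h2 := Finset.sum_le_sum h1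
        have h3 : (∑ i ∈ Finset.range (q + 1), ((m.choose i : ℕ) : ℝ)) ≤ 4 ^ p := by
          have h4 : (∑ i ∈ Finset.range (q + 1), m.choose i)
              ≤ ∑ i ∈ Finset.range (m + 1), m.choose i :=
            Finset.sum_le_sum_of_subset (Finset.range_subset_range.2 (by omega))
          rw [Nat.sum_range_choose] at h4
          calc (∑ i ∈ Finset.range (q + 1), ((m.choose i : ℕ) : ℝ))
              = ((∑ i ∈ Finset.range (q + 1), m.choose i : ℕ) : ℝ) := by
                rw [Nat.cast_sum]
          _ ≤ ((2 ^ m : ℕ) : ℝ) := Nat.cast_le.2 h4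
          _ = 4 ^ p := by
                rw [Nat.cast_pow, Nat.cast_ofNat, show (4:ℝ) = 2 ^ 2 by norm_num, ← pow_mul]
        have hcoefnn : (0:ℝ) ≤ (δ ^ 2 * C' + D) * B
            * (t (k' + 1) ^ (p - 1) * (t (k' + 1) - t k')) := by
          have : (0:ℝ) ≤ δ ^ 2 * C' + D :=
            add_nonneg (mul_nonneg (pow_nonneg hδ0.le 2) hC'0.le) hD0.le
          exact mul_nonneg (mul_nonneg this hB0.le) hEnn
        have h5 := mul_le_mul_of_nonneg_right hkey1 hEnn
        calc (∑ i ∈ Finset.range (q + 1),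
            (∫ ω, A k' ω ^ i ∂P) * (dd ^ (m - i) * ∫ ω, X 1 ω ^ (m - i) ∂P)
              * ((m.choose i : ℕ) : ℝ))
            ≤ ∑ i ∈ Finset.range (q + 1), ((m.choose i : ℕ) : ℝ) * ((δ ^ 2 * C' + D) * B
                * (t (k' + 1) ^ (p - 1) * (t (k' + 1) - t k'))) := h2
        _ = (∑ i ∈ Finset.range (q + 1), ((m.choose i : ℕ) : ℝ)) * ((δ ^ 2 * C' + D) * B
                * (t (k' + 1) ^ (p - 1) * (t (k' + 1) - t k'))) := by
              rw [← Finset.sum_mul]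
        _ ≤ 4 ^ p * ((δ ^ 2 * C' + D) * B
                * (t (k' + 1) ^ (p - 1) * (t (k' + 1) - t k'))) :=
              mul_le_mul_of_nonneg_right h3 hcoefnn
        _ = (4 ^ p * (B * (δ ^ 2 * C' + D)))
                * (t (k' + 1) ^ (p - 1) * (t (k' + 1) - t k')) := by ring
        _ ≤ C' * (t (k' + 1) ^ (p - 1) * (t (k' + 1) - t k')) := h5
      have hgap : C' * t k' ^ p + C' * (t (k' + 1) ^ (p - 1) * (t (k' + 1) - t k'))
          ≤ C' * t (k' + 1) ^ p := by
        have hg := gap_pow (t (k' + 1)) (t k') (tnn k' hk'n) htm (p - 1)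
        rw [show p - 1 + 1 = p from by omega] at hg
        have := mul_le_mul_of_nonneg_left hg hC'0.le
        rw [mul_add] at this
        linarith
      linarith [hsum_small, hmid, htop, hgap]
  -- moment bound for S
  have PS : ∀ k', 1 ≤ k' → k' ≤ n →
      Integrable (fun ω => S k' ω ^ m) P ∧ ∫ ω, S k' ω ^ m ∂P ≤ C * t k' ^ m := by
    intro k' hk'
    induction k', hk' using Nat.le_induction with
    | base =>
      intro h1n
      have hS1 : ∀ ω, S 1 ω = 0 := by
        intro ω; simp [hSdef]
      have he : (fun ω => S 1 ω ^ m) = fun _ => (0:ℝ) := by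
        funext ω; rw [hS1, zero_pow (by omega : m ≠ 0)]
      constructor
      · rw [he]; exact integrable_const 0
      · rw [he, integral_const]
        simp only [smul_eq_mul, mul_zero]
        exact mul_nonneg hC0.le (pow_nonneg (tnn 1 h1n) m)
    | succ k' hk' ih =>
      intro hk1n
      have hk'n : k' ≤ n := by omega
      obtain ⟨ihIntS, ihBdS⟩ := ih hk'n
      obtain ⟨hAint, hAbd⟩ := PA k' hk' hk'n
      set dd : ℝ := d (k' + 1) with hissdd
      set s : ℝ := Real.sqrt (t k') with hs_def
      set s' : ℝ := Real.sqrt (t (k' + 1)) with hs'_def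
      have hs0 : 0 < s := Real.sqrt_pos.2 (tpos k' hk' hk'n)
      have hs2 : s ^ 2 = t k' := Real.sq_sqrt (tnn k' hk'n)
      have hs'2 : s' ^ 2 = t (k' + 1) := Real.sq_sqrt (tnn _ hk1n)
      have htm : t k' ≤ t (k' + 1) := tmono k' (k' + 1) (by omega) hk1n
      have hΔ : dd ^ 2 = t (k' + 1) - t k' := by
        have := hd2 (k' + 1) (by omega) hk1n
        simpa using this
      have hΔnn : 0 ≤ t (k' + 1) - t k' := by linarith
      have hss' : s ≤ s' := Real.sqrt_le_sqrt htm
      have hdd' : dd ≤ s' := by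
        have h1 : t (k' + 1) - t k' ≤ t (k' + 1) := by
          have := tnn k' hk'n; linarith
        have h2 : dd = Real.sqrt (t (k' + 1) - t k') := by
          rw [hissdd, hddef]; simp
        rw [h2]; exact Real.sqrt_le_sqrt h1
      have hddnn : 0 ≤ dd := hdnn _
      -- recursion and expansion
      have hrec : ∀ ω, S (k' + 1) ω = S k' ω + A k' ω * (dd * Y (k' + 1) ω) := by
        intro ω
        simp only [hSdef, hAdef]
        rw [Finset.sum_Icc_succ_top (by omega : 1 ≤ k' + 1), Finset.Ico_add_one_right_eq_Icc]
      have hexp : ∀ ω, S (k' + 1) ω ^ m = ∑ i ∈ Finset.range (m + 1),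
          S k' ω ^ i * A k' ω ^ (m - i) * (dd * Y (k' + 1) ω) ^ (m - i)
            * ((m.choose i : ℕ) : ℝ) := by
        intro ω
        rw [hrec ω, add_pow]
        refine Finset.sum_congr rfl fun i _ => ?_
        rw [mul_pow]
        ring
      -- per-term facts
      have hGint : ∀ j, j ≤ m → Integrable (fun ω => (dd * Y (k' + 1) ω) ^ j) P := by
        intro j hj
        have he : (fun ω => (dd * Y (k' + 1) ω) ^ j) = fun ω => dd ^ j * Y (k' + 1) ω ^ j := by
          funext ω; rw [mul_pow]
        rw [he]; exact (intYl (k' + 1) j (by omega)).const_mul _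
      have hGval : ∀ j, ∫ ω, (dd * Y (k' + 1) ω) ^ j ∂P = dd ^ j * ∫ ω, Y 1 ω ^ j ∂P := by
        intro j
        have he : (fun ω => (dd * Y (k' + 1) ω) ^ j) = fun ω => dd ^ j * Y (k' + 1) ω ^ j := by
          funext ω; rw [mul_pow]
        rw [he, integral_const_mul, eqYl]
      have hHme : ∀ i j, Measurable (fun ω => S k' ω ^ i * A k' ω ^ j) := fun i j =>
        ((hSme k').pow_const i).mul ((hAme k').pow_const j)
      have hHint : ∀ i j, i + j = m → Integrable (fun ω => S k' ω ^ i * A k' ω ^ j) P := by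
        intro i j hij
        refine Integrable.mono' (ihIntS.add hAint)
          (hHme i j).aestronglyMeasurable (Filter.Eventually.of_forall fun ω => ?_)
        rw [Real.norm_eq_abs, abs_mul, abs_pow, abs_pow]
        calc |S k' ω| ^ i * |A k' ω| ^ j ≤ |S k' ω| ^ (i + j) + |A k' ω| ^ (i + j) :=
              young0 _ _ (abs_nonneg _) (abs_nonneg _) i j
        _ = S k' ω ^ m + A k' ω ^ m := by rw [hij, hmev.pow_abs, hmev.pow_abs]
      have hHGint : ∀ i, i ≤ m →
          Integrable (fun ω => S k' ω ^ i * A k' ω ^ (m - i)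
            * (dd * Y (k' + 1) ω) ^ (m - i)) P := by
        intro i hi
        exact (hindS k' i (m - i)).integrable_mul (hHint i (m - i) (by omega))
          (hGint (m - i) (by omega))
      have hfac : ∀ i, i ≤ m → ∫ ω, S k' ω ^ i * A k' ω ^ (m - i)
            * (dd * Y (k' + 1) ω) ^ (m - i) ∂P
          = (∫ ω, S k' ω ^ i * A k' ω ^ (m - i) ∂P)
            * (dd ^ (m - i) * ∫ ω, Y 1 ω ^ (m - i) ∂P) := by
        intro i hi
        rw [← hGval (m - i)]
        exact (hindS k' i (m - i)).integral_fun_mul_eq_mul_integral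
          (hHme i (m - i)).aestronglyMeasurable
          (((hY (k' + 1)).const_mul _).pow_const _).aestronglyMeasurable
      -- the split of the integral
      have hsplit : ∫ ω, S (k' + 1) ω ^ m ∂P = ∑ i ∈ Finset.range (m + 1),
          (∫ ω, S k' ω ^ i * A k' ω ^ (m - i) ∂P)
            * (dd ^ (m - i) * ∫ ω, Y 1 ω ^ (m - i) ∂P) * ((m.choose i : ℕ) : ℝ) := by
        calc ∫ ω, S (k' + 1) ω ^ m ∂P
            = ∫ ω, ∑ i ∈ Finset.range (m + 1), S k' ω ^ i * A k' ω ^ (m - i)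
                * (dd * Y (k' + 1) ω) ^ (m - i) * ((m.choose i : ℕ) : ℝ) ∂P :=
              integral_congr_ae (Filter.Eventually.of_forall hexp)
        _ = ∑ i ∈ Finset.range (m + 1), ∫ ω, S k' ω ^ i * A k' ω ^ (m - i)
                * (dd * Y (k' + 1) ω) ^ (m - i) * ((m.choose i : ℕ) : ℝ) ∂P :=
              integral_finset_sum _ (fun i hi =>
                (hHGint i (by simp at hi; omega)).mul_const _)
        _ = ∑ i ∈ Finset.range (m + 1), (∫ ω, S k' ω ^ i * A k' ω ^ (m - i)
                * (dd * Y (k' + 1) ω) ^ (m - i) ∂P) * ((m.choose i : ℕ) : ℝ) :=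
              Finset.sum_congr rfl fun i _ => integral_mul_const _ _
        _ = _ := Finset.sum_congr rfl fun i hi => by
              rw [hfac i (by simp at hi; omega)]
      -- bound the small terms
      have hH_bd : ∀ i j, i + j = m → 2 ≤ j →
          |∫ ω, S k' ω ^ i * A k' ω ^ j ∂P| ≤ (δ ^ 2 * C + D * C') * (s ^ (m + i)) := by
        intro i j hij hj2
        have h7 : t k' ^ m = s ^ m * s ^ m := by
          rw [← hs2, ← pow_mul, two_mul, pow_add]
        have h8 : t k' ^ p = s ^ m := by
          rw [← hs2, ← pow_mul]
        have hptw : ∀ ω, |S k' ω ^ i * A k' ω ^ j| * s ^ j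
            ≤ δ ^ j * S k' ω ^ m + (1 / δ) ^ i * s ^ m * A k' ω ^ m := by
          intro ω
          have hy := young5 |S k' ω| |A k' ω| s δ (abs_nonneg _) (abs_nonneg _) hs0.le hδ0 i j
          rw [hij] at hy
          rw [abs_mul, abs_pow, abs_pow]
          calc |S k' ω| ^ i * |A k' ω| ^ j * s ^ j
              ≤ δ ^ j * |S k' ω| ^ m + (1 / δ) ^ i * (s ^ m * |A k' ω| ^ m) := hy
          _ = δ ^ j * S k' ω ^ m + (1 / δ) ^ i * s ^ m * A k' ω ^ m := by
                rw [hmev.pow_abs, hmev.pow_abs]; ring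
        have hdomI : Integrable
            (fun ω => δ ^ j * S k' ω ^ m + (1 / δ) ^ i * s ^ m * A k' ω ^ m) P :=
          (ihIntS.const_mul _).add (hAint.const_mul _)
        have h2 : (∫ ω, |S k' ω ^ i * A k' ω ^ j| ∂P) * s ^ j
            ≤ δ ^ j * ∫ ω, S k' ω ^ m ∂P
              + (1 / δ) ^ i * s ^ m * ∫ ω, A k' ω ^ m ∂P := by
          rw [← integral_mul_const]
          calc ∫ ω, |S k' ω ^ i * A k' ω ^ j| * s ^ j ∂P
              ≤ ∫ ω, (δ ^ j * S k' ω ^ m + (1 / δ) ^ i * s ^ m * A k' ω ^ m) ∂P :=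
                integral_mono ((hHint i j hij).abs.mul_const _) hdomI hptw
          _ = _ := by
                rw [integral_add (ihIntS.const_mul _) (hAint.const_mul _),
                  integral_const_mul, integral_const_mul]
        have hA1 : δ ^ j ≤ δ ^ 2 := pow_le_pow_of_le_one hδ0.le hδ1 hj2
        have hA2 : (1 / δ) ^ i ≤ D := hDbd i (by omega)
        have hsm : (0:ℝ) ≤ s ^ m := pow_nonneg hs0.le m
        have hsm2 : (0:ℝ) ≤ s ^ m * s ^ m := mul_nonneg hsm hsm
        have h4 : (∫ ω, |S k' ω ^ i * A k' ω ^ j| ∂P) * s ^ j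
            ≤ (δ ^ 2 * C + D * C') * (s ^ m * s ^ m) := by
          have b0 : δ ^ j * ∫ ω, S k' ω ^ m ∂P ≤ δ ^ j * (C * (s ^ m * s ^ m)) := by
            rw [← h7]
            exact mul_le_mul_of_nonneg_left ihBdS (pow_nonneg hδ0.le j)
          have b1 : δ ^ j * (C * (s ^ m * s ^ m)) ≤ δ ^ 2 * (C * (s ^ m * s ^ m)) :=
            mul_le_mul_of_nonneg_right hA1 (mul_nonneg hC0.le hsm2)
          have b2 : (1 / δ) ^ i * s ^ m * ∫ ω, A k' ω ^ m ∂P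
              ≤ (1 / δ) ^ i * s ^ m * (C' * s ^ m) := by
            have hinv : (0:ℝ) ≤ (1 / δ) ^ i * s ^ m :=
              mul_nonneg (pow_nonneg (by positivity) i) hsm
            have := mul_le_mul_of_nonneg_left hAbd hinv
            rw [h8] at this
            exact this
          have b3 : (1 / δ) ^ i * s ^ m * (C' * s ^ m) ≤ D * s ^ m * (C' * s ^ m) :=
            mul_le_mul_of_nonneg_right (mul_le_mul_of_nonneg_right hA2 hsm)
              (mul_nonneg hC'0.le hsm)
          have e : (δ ^ 2 * C + D * C') * (s ^ m * s ^ m)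
              = δ ^ 2 * (C * (s ^ m * s ^ m)) + D * s ^ m * (C' * s ^ m) := by ring
          rw [e]
          linarith
        have h5 : s ^ m * s ^ m = s ^ (m + i) * s ^ j := by
          rw [← pow_add, ← pow_add]
          congr 1
          omega
        have h6 : (∫ ω, |S k' ω ^ i * A k' ω ^ j| ∂P)
            ≤ (δ ^ 2 * C + D * C') * s ^ (m + i) := by
          have hsj : 0 < s ^ j := pow_pos hs0 j
          rw [h5, ← mul_assoc] at h4
          exact le_of_mul_le_mul_right h4 hsj
        calc |∫ ω, S k' ω ^ i * A k' ω ^ j ∂P|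
            ≤ ∫ ω, |S k' ω ^ i * A k' ω ^ j| ∂P := by
              rw [← Real.norm_eq_abs]
              refine le_trans (norm_integral_le_integral_norm _) (le_of_eq ?_)
              refine integral_congr_ae (Filter.Eventually.of_forall fun ω => ?_)
              simp only [Real.norm_eq_abs, abs_mul, abs_pow]
        _ ≤ _ := h6
      -- Y-moment bound
      have hYb : ∀ j, j ≤ m → |∫ ω, Y 1 ω ^ j ∂P| ≤ B := fun j hj => (momY j (by omega)).2
      -- small term bound
      have hsmall : ∀ i, i ≤ m - 2 →
          |(∫ ω, S k' ω ^ i * A k' ω ^ (m - i) ∂P)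
            * (dd ^ (m - i) * ∫ ω, Y 1 ω ^ (m - i) ∂P) * ((m.choose i : ℕ) : ℝ)|
          ≤ ((m.choose i : ℕ) : ℝ) * ((δ ^ 2 * C + D * C') * B
              * (t (k' + 1) ^ (m - 1) * (t (k' + 1) - t k'))) := by
        intro i hi
        set j : ℕ := m - i with hj_def
        have hij : i + j = m := by omega
        have hj2 : 2 ≤ j := by omega
        have e1 : |(∫ ω, S k' ω ^ i * A k' ω ^ j ∂P) * (dd ^ j * ∫ ω, Y 1 ω ^ j ∂P)
              * ((m.choose i : ℕ) : ℝ)|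
            = |∫ ω, S k' ω ^ i * A k' ω ^ j ∂P| * (dd ^ j * |∫ ω, Y 1 ω ^ j ∂P|)
              * ((m.choose i : ℕ) : ℝ) := by
          rw [abs_mul, abs_mul, abs_mul, abs_pow, abs_of_nonneg hddnn, Nat.abs_cast]
        rw [e1]
        have hcoefnn : (0:ℝ) ≤ δ ^ 2 * C + D * C' :=
          add_nonneg (mul_nonneg (pow_nonneg hδ0.le 2) hC0.le)
            (mul_nonneg hD0.le hC'0.le)
        have hb1 : |∫ ω, S k' ω ^ i * A k' ω ^ j ∂P| * (dd ^ j * |∫ ω, Y 1 ω ^ j ∂P|)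
            ≤ ((δ ^ 2 * C + D * C') * s ^ (m + i)) * (dd ^ j * B) := by
          apply mul_le_mul (hH_bd i j hij hj2)
          · exact mul_le_mul_of_nonneg_left (hYb j (by omega)) (pow_nonneg hddnn j)
          · exact mul_nonneg (pow_nonneg hddnn j) (abs_nonneg _)
          · exact mul_nonneg hcoefnn (pow_nonneg hs0.le _)
        have hb2 : s ^ (m + i) * dd ^ j ≤ t (k' + 1) ^ (m - 1) * (t (k' + 1) - t k') := by
          have hs'nn : 0 ≤ s' := Real.sqrt_nonneg _
          have h1 : s ^ (m + i) ≤ s' ^ (m + i) := pow_le_pow_left₀ hs0.le hss' _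
          have h2 : s' ^ (m + i) * dd ^ j ≤ s' ^ (2 * m - 2) * dd ^ 2 := by
            have := pow_mul_pow_le s' dd hddnn hdd' (2 * m) j hj2 (by omega)
            rw [show 2 * m - j = m + i from by omega] at this
            exact this
          have h3 : s' ^ (2 * m - 2) * dd ^ 2
              = t (k' + 1) ^ (m - 1) * (t (k' + 1) - t k') := by
            rw [show 2 * m - 2 = 2 * (m - 1) from by omega, pow_mul, hs'2, hΔ]
          calc s ^ (m + i) * dd ^ j ≤ s' ^ (m + i) * dd ^ j :=
                mul_le_mul_of_nonneg_right h1 (pow_nonneg hddnn j)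
          _ ≤ s' ^ (2 * m - 2) * dd ^ 2 := h2
          _ = _ := h3
        calc |∫ ω, S k' ω ^ i * A k' ω ^ j ∂P| * (dd ^ j * |∫ ω, Y 1 ω ^ j ∂P|)
              * ((m.choose i : ℕ) : ℝ)
            ≤ ((δ ^ 2 * C + D * C') * s ^ (m + i)) * (dd ^ j * B)
              * ((m.choose i : ℕ) : ℝ) :=
              mul_le_mul_of_nonneg_right hb1 (Nat.cast_nonneg _)
        _ = ((m.choose i : ℕ) : ℝ) * ((δ ^ 2 * C + D * C') * B * (s ^ (m + i) * dd ^ j)) := by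
              ring
        _ ≤ ((m.choose i : ℕ) : ℝ) * ((δ ^ 2 * C + D * C') * B
              * (t (k' + 1) ^ (m - 1) * (t (k' + 1) - t k'))) := by
              apply mul_le_mul_of_nonneg_left _ (Nat.cast_nonneg _)
              apply mul_le_mul_of_nonneg_left hb2 (mul_nonneg hcoefnn hB0.le)
      -- assemble
      obtain ⟨q, hq⟩ : ∃ q, m = q + 2 := ⟨m - 2, by omega⟩
      have hIntNew : Integrable (fun ω => S (k' + 1) ω ^ m) P := by
        have he : (fun ω => S (k' + 1) ω ^ m) = fun ω => ∑ i ∈ Finset.range (m + 1),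
            S k' ω ^ i * A k' ω ^ (m - i) * (dd * Y (k' + 1) ω) ^ (m - i)
              * ((m.choose i : ℕ) : ℝ) := funext hexp
        rw [he]
        exact integrable_finset_sum _ fun i hi =>
          (hHGint i (by simp at hi; omega)).mul_const _
      refine ⟨hIntNew, ?_⟩
      rw [hsplit, show m + 1 = q + 1 + 1 + 1 from by omega, Finset.sum_range_succ,
        Finset.sum_range_succ]
      beta_reduce
      have hmid : (∫ ω, S k' ω ^ (q + 1) * A k' ω ^ (m - (q + 1)) ∂P)
          * (dd ^ (m - (q + 1)) * ∫ ω, Y 1 ω ^ (m - (q + 1)) ∂P)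
          * ((m.choose (q + 1) : ℕ) : ℝ) = 0 := by
        rw [show m - (q + 1) = 1 from by omega]
        simp [hYmean]
      have htop : (∫ ω, S k' ω ^ (q + 1 + 1) * A k' ω ^ (m - (q + 1 + 1)) ∂P)
          * (dd ^ (m - (q + 1 + 1)) * ∫ ω, Y 1 ω ^ (m - (q + 1 + 1)) ∂P)
          * ((m.choose (q + 1 + 1) : ℕ) : ℝ) ≤ C * t k' ^ m := by
        rw [show m - (q + 1 + 1) = 0 from by omega, show q + 1 + 1 = m from by omega,
          Nat.choose_self]
        have hY0 : ∫ ω, Y 1 ω ^ 0 ∂P = 1 := by simp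
        rw [hY0]
        simp only [pow_zero, mul_one, Nat.cast_one]
        exact ihBdS
      have hEnn : (0:ℝ) ≤ t (k' + 1) ^ (m - 1) * (t (k' + 1) - t k') :=
        mul_nonneg (pow_nonneg (tnn _ hk1n) _) hΔnn
      have hsum_small : (∑ i ∈ Finset.range (q + 1),
          (∫ ω, S k' ω ^ i * A k' ω ^ (m - i) ∂P)
            * (dd ^ (m - i) * ∫ ω, Y 1 ω ^ (m - i) ∂P) * ((m.choose i : ℕ) : ℝ))
          ≤ C * (t (k' + 1) ^ (m - 1) * (t (k' + 1) - t k')) := by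
        have h1 : ∀ i ∈ Finset.range (q + 1),
            (∫ ω, S k' ω ^ i * A k' ω ^ (m - i) ∂P)
              * (dd ^ (m - i) * ∫ ω, Y 1 ω ^ (m - i) ∂P) * ((m.choose i : ℕ) : ℝ)
            ≤ ((m.choose i : ℕ) : ℝ) * ((δ ^ 2 * C + D * C') * B
                * (t (k' + 1) ^ (m - 1) * (t (k' + 1) - t k'))) := fun i hi =>
          le_trans (le_abs_self _) (hsmall i (by simp at hi; omega))
        have h2 := Finset.sum_le_sum h1
        have h3 : (∑ i ∈ Finset.range (q + 1), ((m.choose i : ℕ) : ℝ)) ≤ 4 ^ p := by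
          have h4 : (∑ i ∈ Finset.range (q + 1), m.choose i)
              ≤ ∑ i ∈ Finset.range (m + 1), m.choose i :=
            Finset.sum_le_sum_of_subset (Finset.range_subset_range.2 (by omega))
          rw [Nat.sum_range_choose] at h4
          calc (∑ i ∈ Finset.range (q + 1), ((m.choose i : ℕ) : ℝ))
              = ((∑ i ∈ Finset.range (q + 1), m.choose i : ℕ) : ℝ) := by
                rw [Nat.cast_sum]
          _ ≤ ((2 ^ m : ℕ) : ℝ) := Nat.cast_le.2 h4
          _ = 4 ^ p := by
                rw [Nat.cast_pow, Nat.cast_ofNat, show (4:ℝ) = 2 ^ 2 by norm_num, ← pow_mul]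
        have hcoefnn : (0:ℝ) ≤ δ ^ 2 * C + D * C' :=
          add_nonneg (mul_nonneg (pow_nonneg hδ0.le 2) hC0.le)
            (mul_nonneg hD0.le hC'0.le)
        have hRnn : (0:ℝ) ≤ (δ ^ 2 * C + D * C') * B
            * (t (k' + 1) ^ (m - 1) * (t (k' + 1) - t k')) :=
          mul_nonneg (mul_nonneg hcoefnn hB0.le) hEnn
        have h5 := mul_le_mul_of_nonneg_right hkey2 hEnn
        calc (∑ i ∈ Finset.range (q + 1),
            (∫ ω, S k' ω ^ i * A k' ω ^ (m - i) ∂P)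
              * (dd ^ (m - i) * ∫ ω, Y 1 ω ^ (m - i) ∂P) * ((m.choose i : ℕ) : ℝ))
            ≤ ∑ i ∈ Finset.range (q + 1), ((m.choose i : ℕ) : ℝ)
                * ((δ ^ 2 * C + D * C') * B
                  * (t (k' + 1) ^ (m - 1) * (t (k' + 1) - t k'))) := h2
        _ = (∑ i ∈ Finset.range (q + 1), ((m.choose i : ℕ) : ℝ))
                * ((δ ^ 2 * C + D * C') * B
                  * (t (k' + 1) ^ (m - 1) * (t (k' + 1) - t k'))) := by
              rw [← Finset.sum_mul]
        _ ≤ 4 ^ p * ((δ ^ 2 * C + D * C') * B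
                * (t (k' + 1) ^ (m - 1) * (t (k' + 1) - t k'))) :=
              mul_le_mul_of_nonneg_right h3 hRnn
        _ = (4 ^ p * (B * (δ ^ 2 * C + D * C')))
                * (t (k' + 1) ^ (m - 1) * (t (k' + 1) - t k')) := by ring
        _ ≤ C * (t (k' + 1) ^ (m - 1) * (t (k' + 1) - t k')) := h5
      have hgap : C * t k' ^ m + C * (t (k' + 1) ^ (m - 1) * (t (k' + 1) - t k'))
          ≤ C * t (k' + 1) ^ m := by
        have hg := gap_pow (t (k' + 1)) (t k') (tnn k' hk'n) htm (m - 1)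
        rw [show m - 1 + 1 = m from by omega] at hg
        have := mul_le_mul_of_nonneg_left hg hC0.le
        rw [mul_add] at this
        linarith
      linarith [hsum_small, hmid, htop, hgap]
  -- conclusion
  obtain ⟨-, hSbd⟩ := PS k hk1 hkn
  have hfinal : (fun ω => |∑ l2 ∈ Finset.Icc 1 k, ∑ l1 ∈ Finset.Ico 1 l2,
      Real.sqrt (t l1 - t (l1 - 1)) * X l1 ω * (Real.sqrt (t l2 - t (l2 - 1)) * Y l2 ω)| ^ m)
      = fun ω => S k ω ^ m := by
    funext ω
    rw [hmev.pow_abs]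
    congr 1
    rw [hSdef]
    refine Finset.sum_congr rfl fun l2 _ => ?_
    rw [Finset.sum_mul]
  calc ∫ ω, |∑ l2 ∈ Finset.Icc 1 k, ∑ l1 ∈ Finset.Ico 1 l2,
      Real.sqrt (t l1 - t (l1 - 1)) * X l1 ω
        * (Real.sqrt (t l2 - t (l2 - 1)) * Y l2 ω)| ^ m ∂P
      = ∫ ω, S k ω ^ m ∂P := by rw [hfinal]
  _ ≤ C * t k ^ m := hSbd
end

section
/- Let $h : [0,1] \to \mathbb{R}$ be $L$-Lipschitz with $h(0) = 0$ and $h(1) = 1$, let $\mathcal{D} = \{0 = t_0 < \cdots < t_n = 1\}$ be a mesh, and define $h^{\mathcal{D}}(t) = t_i + \Delta t_{i+1}\, h\big( \frac{t - t_i}{\Delta t_{i+1}} \big)$ for $t \in [t_i, t_{i+1}]$. Then for every $\beta \in (0,1)$ and all $s, t \in [0,1]$ with $s \ne t$, $\big| \big( h^{\mathcal{D}}(t) - t \big) - \big( h^{\mathcal{D}}(s) - s \big) \big| \le 2^{1-\beta} (1 + L)\, |\mathcal{D}|^{1-\beta}\, |t - s|^{\beta}$. In particular, for every sequence of meshes $\mathcal{D}_n$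 with $|\mathcal{D}_n| \to 0$, the paths $h^{\mathcal{D}_n}$ converge to the identity map $\mathrm{id}(t) = t$ in $\beta$-Hölder norm for every $\beta < 1$. -/
open MeasureTheory Filter

private lemma interp12 {D a b β : ℝ} (hD0 : 0 ≤ D) (ha : D ≤ a) (hb : D ≤ b)
    (hβ0 : 0 ≤ β) (hβ1 : β ≤ 1) : D ≤ a ^ (1 - β) * b ^ β := by
  rcases eq_or_lt_of_le hD0 with hD | hD
  · have ha0 : 0 ≤ a := le_trans hD0 ha
    have hb0 : 0 ≤ b := le_trans hD0 hb
    rw [← hD]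
    positivity
  · have hDD : D = D ^ (1 - β) * D ^ β := by
      rw [← Real.rpow_add hD, sub_add_cancel, Real.rpow_one]
    nth_rewrite 1 [hDD]
    exact mul_le_mul (Real.rpow_le_rpow hD0 ha (by linarith))
      (Real.rpow_le_rpow hD0 hb hβ0) (Real.rpow_nonneg hD0 β)
      (Real.rpow_nonneg (le_trans hD0 ha) _)

private lemma key12 (L : NNReal) (h : ℝ → ℝ)
    (hLip : LipschitzOnWith L h (Set.Icc 0 1)) (h0 : h 0 = 0) (h1 : h 1 = 1)
    (n : ℕ) (hn : 0 < n) (t : ℕ → ℝ) (ht0 : t 0 = 0) (htn : t n = 1)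
    (hmono : ∀ i, i < n → t i < t (i + 1)) (hD : ℝ → ℝ)
    (hDeq : ∀ i, i < n → ∀ s ∈ Set.Icc (t i) (t (i + 1)),
      hD s = t i + (t (i + 1) - t i) * h ((s - t i) / (t (i + 1) - t i)))
    (M : ℝ) (hM : ∀ k ∈ Finset.Icc 1 n, t k - t (k - 1) ≤ M)
    (β : ℝ) (hβ0 : 0 < β) (hβ1 : β < 1) :
    ∀ s ∈ Set.Icc (0 : ℝ) 1, ∀ u ∈ Set.Icc (0 : ℝ) 1, s ≠ u →
      |(hD u - u) - (hD s - s)|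
        ≤ (2 : ℝ) ^ (1 - β) * (1 + (L : ℝ)) * M ^ (1 - β) * |u - s| ^ β := by
  classical
  have hL0 : (0:ℝ) ≤ 1 + (L : ℝ) := by positivity
  -- M ≥ 0
  have hM0 : 0 ≤ M := by
    have h10 := hmono 0 hn
    have := hM 1 (Finset.mem_Icc.mpr ⟨le_refl 1, hn⟩)
    simp only [Nat.sub_self] at this
    linarith
  -- monotonicity of t
  have tmono : ∀ i j, i ≤ j → j ≤ n → t i ≤ t j := by
    intro i j hij hjn
    induction j with
    | zero => obtain rfl := Nat.le_zero.mp hij; exact le_refl _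
    | succ k ih =>
      rcases Nat.lt_succ_iff_lt_or_eq.mp (Nat.lt_succ_of_le hij) with hk | hk
      · exact le_trans (ih (Nat.lt_succ_iff.mp hk) (by omega)) (hmono k (by omega)).le
      · rw [hk]
  -- fixed points
  have hfix : ∀ i, i ≤ n → hD (t i) = t i := by
    intro i hi
    rcases Nat.lt_or_ge i n with hlt | hge
    · have := hDeq i hlt (t i) ⟨le_refl _, (hmono i hlt).le⟩
      simp [h0] at this
      exact this
    · have hieq : i = n := le_antisymm hi hge
      rw [hieq]
      have hn1 : n - 1 < n := by omega
      have hsucc : n - 1 + 1 = n := Nat.sub_add_cancel hn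
      have hlt2 : t (n-1) < t n := by
        have := hmono (n-1) hn1; rwa [hsucc] at this
      have hs : t n ∈ Set.Icc (t (n-1)) (t (n-1+1)) := by
        rw [hsucc]; exact ⟨hlt2.le, le_refl _⟩
      have heq := hDeq (n-1) hn1 (t n) hs
      rw [hsucc] at heq
      have hΔ : t n - t (n-1) ≠ 0 := by linarith
      rw [heq, div_self hΔ, h1]; ring
  -- within interval Lipschitz-type bound for the drift-removed path
  have hip : ∀ i, i < n → ∀ s ∈ Set.Icc (t i) (t (i+1)), ∀ u ∈ Set.Icc (t i) (t (i+1)),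
      |(hD u - u) - (hD s - s)| ≤ (1 + (L:ℝ)) * |u - s| := by
    intro i hi s hs u hu
    have hΔpos : 0 < t (i+1) - t i := sub_pos.mpr (hmono i hi)
    set Δ := t (i+1) - t i with hΔdef
    have hrs : (s - t i)/Δ ∈ Set.Icc (0:ℝ) 1 :=
      ⟨div_nonneg (by linarith [hs.1]) hΔpos.le, (div_le_one hΔpos).mpr (by linarith [hs.2])⟩
    have hru : (u - t i)/Δ ∈ Set.Icc (0:ℝ) 1 :=
      ⟨div_nonneg (by linarith [hu.1]) hΔpos.le, (div_le_one hΔpos).mpr (by linarith [hu.2])⟩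
    have hd := hLip.dist_le_mul _ hru _ hrs
    rw [Real.dist_eq, Real.dist_eq] at hd
    have hrdiff : (u - t i)/Δ - (s - t i)/Δ = (u - s)/Δ := by
      field_simp
      ring
    rw [hrdiff, abs_div, abs_of_pos hΔpos] at hd
    rw [hDeq i hi s hs, hDeq i hi u hu]
    have e1 : (t i + Δ * h ((u - t i)/Δ) - u) - (t i + Δ * h ((s - t i)/Δ) - s)
        = Δ * (h ((u - t i)/Δ) - h ((s - t i)/Δ)) - (u - s) := by ring
    rw [e1]
    calc |Δ * (h ((u - t i)/Δ) - h ((s - t i)/Δ)) - (u - s)|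
        ≤ |Δ * (h ((u - t i)/Δ) - h ((s - t i)/Δ))| + |u - s| := abs_sub _ _
      _ = Δ * |h ((u - t i)/Δ) - h ((s - t i)/Δ)| + |u - s| := by
          rw [abs_mul, abs_of_pos hΔpos]
      _ ≤ Δ * ((L:ℝ) * (|u - s| / Δ)) + |u - s| := by
          have := mul_le_mul_of_nonneg_left hd hΔpos.le
          linarith
      _ = (1 + (L:ℝ)) * |u - s| := by field_simp; ring
  -- sup bound
  have hsup : ∀ i, i < n → ∀ s ∈ Set.Icc (t i) (t (i+1)), |hD s - s| ≤ (1 + (L:ℝ)) * M := by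
    intro i hi s hs
    have hΔpos : 0 < t (i+1) - t i := sub_pos.mpr (hmono i hi)
    have hr : (s - t i)/(t (i+1) - t i) ∈ Set.Icc (0:ℝ) 1 :=
      ⟨div_nonneg (by linarith [hs.1]) hΔpos.le, (div_le_one hΔpos).mpr (by linarith [hs.2])⟩
    have hd := hLip.dist_le_mul _ hr _ (Set.left_mem_Icc.mpr zero_le_one)
    rw [Real.dist_eq, Real.dist_eq, h0, sub_zero, sub_zero, abs_of_nonneg hr.1] at hd
    have hΔM : t (i+1) - t i ≤ M := by
      have := hM (i+1) (Finset.mem_Icc.mpr ⟨by omega, hi⟩)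
      simpa using this
    rw [hDeq i hi s hs]
    have e1 : t i + (t (i+1) - t i) * h ((s - t i)/(t (i+1) - t i)) - s
        = (t (i+1) - t i) * (h ((s - t i)/(t (i+1) - t i)) - (s - t i)/(t (i+1) - t i)) := by
      field_simp
      ring
    rw [e1, abs_mul, abs_of_pos hΔpos]
    have hhr : |h ((s - t i)/(t (i+1) - t i)) - (s - t i)/(t (i+1) - t i)| ≤ 1 + (L:ℝ) := by
      have h1r : |(s - t i)/(t (i+1) - t i)| ≤ 1 := abs_le.mpr ⟨by linarith [hr.1], hr.2⟩
      have h2 : |h ((s - t i)/(t (i+1) - t i))| ≤ (L:ℝ) :=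
        le_trans hd (mul_le_of_le_one_right L.coe_nonneg hr.2)
      have h3 := abs_sub (h ((s - t i)/(t (i+1) - t i))) ((s - t i)/(t (i+1) - t i))
      linarith
    calc (t (i+1) - t i) * |h ((s - t i)/(t (i+1) - t i)) - (s - t i)/(t (i+1) - t i)|
        ≤ (t (i+1) - t i) * (1 + (L:ℝ)) := mul_le_mul_of_nonneg_left hhr hΔpos.le
      _ ≤ M * (1 + (L:ℝ)) := mul_le_mul_of_nonneg_right hΔM hL0
      _ = (1 + (L:ℝ)) * M := mul_comm _ _
  -- index of the interval containing a point
  set idx : ℝ → ℕ := fun s => Nat.findGreatest (fun i => t i ≤ s) (n-1) with hidxdef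
  have hidx_lt : ∀ s, idx s < n := fun s => lt_of_le_of_lt (Nat.findGreatest_le _) (by omega)
  have hidx_le : ∀ s ∈ Set.Icc (0:ℝ) 1, t (idx s) ≤ s := by
    intro s hs
    have := Nat.findGreatest_spec (P := fun i => t i ≤ s) (n := n - 1) (m := 0) (Nat.zero_le _)
      (by simpa [ht0] using hs.1)
    exact this
  have hidx_ge : ∀ s ∈ Set.Icc (0:ℝ) 1, s ≤ t (idx s + 1) := by
    intro s hs
    rcases Nat.lt_or_ge (idx s) (n-1) with hlt | hge
    · by_contra hcon
      push_neg at hcon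
      have hg : ¬ ((fun i => t i ≤ s) (idx s + 1)) :=
        Nat.findGreatest_is_greatest (P := fun i => t i ≤ s) (n := n - 1) (k := idx s + 1)
          (Nat.lt_succ_self _) (by omega)
      exact hg hcon.le
    · have h' := hidx_lt s
      have heq : idx s + 1 = n := by omega
      rw [heq, htn]; exact hs.2
  have hidx_mono : ∀ s u : ℝ, s ≤ u → idx s ≤ idx u := by
    intro s u hsu
    exact Nat.findGreatest_mono (fun i hi => le_trans hi hsu) le_rfl
  -- global Lipschitz-type bound
  have hlip : ∀ s ∈ Set.Icc (0:ℝ) 1, ∀ u ∈ Set.Icc (0:ℝ) 1, s ≤ u →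
      |(hD u - u) - (hD s - s)| ≤ (1 + (L:ℝ)) * |u - s| := by
    intro s hs u hu hsu
    have hi := hidx_lt s
    have hj := hidx_lt u
    have hsmem : s ∈ Set.Icc (t (idx s)) (t (idx s + 1)) := ⟨hidx_le s hs, hidx_ge s hs⟩
    have humem : u ∈ Set.Icc (t (idx u)) (t (idx u + 1)) := ⟨hidx_le u hu, hidx_ge u hu⟩
    rcases eq_or_lt_of_le (hidx_mono s u hsu) with hij | hij
    · have humem' : u ∈ Set.Icc (t (idx s)) (t (idx s + 1)) := by rw [hij]; exact humem
      exact hip (idx s) hi s hsmem u humem'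
    · have hij1 : idx s + 1 ≤ idx u := hij
      have e1 := hip (idx u) hj (t (idx u)) ⟨le_refl _, (hmono (idx u) hj).le⟩ u humem
      have e2 := hip (idx s) hi s hsmem (t (idx s + 1)) ⟨(hmono (idx s) hi).le, le_refl _⟩
      rw [hfix (idx u) hj.le] at e1
      rw [hfix (idx s + 1) (by omega)] at e2
      simp only [sub_self, sub_zero, zero_sub, abs_neg] at e1 e2
      have hmid : t (idx s + 1) ≤ t (idx u) := tmono _ _ hij1 hj.le
      have habs1 : |u - t (idx u)| = u - t (idx u) := abs_of_nonneg (by linarith [humem.1])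
      have habs2 : |t (idx s + 1) - s| = t (idx s + 1) - s := abs_of_nonneg (by linarith [hsmem.2])
      have habs3 : |u - s| = u - s := abs_of_nonneg (by linarith)
      rw [habs1] at e1
      rw [habs2] at e2
      have htr := abs_sub (hD u - u) (hD s - s)
      rw [habs3]
      nlinarith [hL0]
  -- now the conclusion
  intro s hs u hu hsu
  have hsupb : |(hD u - u) - (hD s - s)| ≤ 2 * (1 + (L:ℝ)) * M := by
    have b1 := hsup (idx u) (hidx_lt u) u ⟨hidx_le u hu, hidx_ge u hu⟩
    have b2 := hsup (idx s) (hidx_lt s) s ⟨hidx_le s hs, hidx_ge s hs⟩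
    have htr := abs_sub (hD u - u) (hD s - s)
    linarith
  have hlipb : |(hD u - u) - (hD s - s)| ≤ (1 + (L:ℝ)) * |u - s| := by
    rcases le_total s u with hle | hle
    · exact hlip s hs u hu hle
    · rw [abs_sub_comm, abs_sub_comm u s]
      exact hlip u hu s hs hle
  have key := interp12 (abs_nonneg _) hsupb hlipb hβ0.le hβ1.le
  refine le_trans key (le_of_eq ?_)
  have hus0 : (0:ℝ) ≤ |u - s| := abs_nonneg _
  rw [show (2*(1+(L:ℝ))*M) = 2*((1+(L:ℝ))*M) by ring,
    Real.mul_rpow (by norm_num) (by positivity),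
    Real.mul_rpow hL0 hM0, Real.mul_rpow hL0 hus0]
  have hpow : ((1:ℝ)+(L:ℝ))^(1-β) * ((1:ℝ)+(L:ℝ))^β = 1+(L:ℝ) := by
    rw [← Real.rpow_add (by positivity), sub_add_cancel, Real.rpow_one]
  linear_combination ((2:ℝ)^(1-β) * M^(1-β) * |u-s|^β) * hpow

/-- Hölder estimate for the rescaled concatenation `h^𝒟` of an
`L`-Lipschitz time-change `h` with `h(0) = 0`, `h(1) = 1`: for every `β ∈ (0,1)` and
`s ≠ u` in `[0,1]`,
`|(h^𝒟(u) - u) - (h^𝒟(s) - s)| ≤ 2^{1-β} (1+L) M^{1-β} |u - s|^β`, where `M` bounds the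
mesh size; consequently, along any sequence of meshes with mesh size tending to `0`, the
paths `h^{𝒟_n}` converge to the identity in `β`-Hölder norm for every `β < 1`. -/
theorem statement_12 (L : NNReal) (h : ℝ → ℝ)
    (hLip : LipschitzOnWith L h (Set.Icc 0 1)) (h0 : h 0 = 0) (h1 : h 1 = 1) :
    (∀ (n : ℕ), 0 < n → ∀ t : ℕ → ℝ, t 0 = 0 → t n = 1 →
      (∀ i, i < n → t i < t (i + 1)) →
      ∀ hD : ℝ → ℝ,
        (∀ i, i < n → ∀ s ∈ Set.Icc (t i) (t (i + 1)),
          hD s = t i + (t (i + 1) - t i) * h ((s - t i) / (t (i + 1) - t i))) →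
        ∀ M : ℝ, (∀ k ∈ Finset.Icc 1 n, t k - t (k - 1) ≤ M) →
        ∀ β : ℝ, 0 < β → β < 1 →
        ∀ s ∈ Set.Icc (0 : ℝ) 1, ∀ u ∈ Set.Icc (0 : ℝ) 1, s ≠ u →
          |(hD u - u) - (hD s - s)|
            ≤ (2 : ℝ) ^ (1 - β) * (1 + (L : ℝ)) * M ^ (1 - β) * |u - s| ^ β) ∧
    (∀ (N : ℕ → ℕ) (t : ℕ → ℕ → ℝ),
      (∀ m, 0 < N m) → (∀ m, t m 0 = 0) → (∀ m, t m (N m) = 1) →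
      (∀ m i, i < N m → t m i < t m (i + 1)) →
      ∀ hD : ℕ → ℝ → ℝ,
        (∀ m i, i < N m → ∀ s ∈ Set.Icc (t m i) (t m (i + 1)),
          hD m s = t m i + (t m (i + 1) - t m i) * h ((s - t m i) / (t m (i + 1) - t m i))) →
        ∀ M : ℕ → ℝ, (∀ m, ∀ k ∈ Finset.Icc 1 (N m), t m k - t m (k - 1) ≤ M m) →
          Tendsto M atTop (nhds 0) →
          ∀ β : ℝ, 0 < β → β < 1 →
            ∀ ε : ℝ, 0 < ε → ∃ m₀ : ℕ, ∀ m, m₀ ≤ m →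
              ∀ s ∈ Set.Icc (0 : ℝ) 1, ∀ u ∈ Set.Icc (0 : ℝ) 1, s ≠ u →
                |(hD m u - u) - (hD m s - s)| ≤ ε * |u - s| ^ β) := by
  constructor
  · intro n hn t ht0 htn hmono hD hDeq M hM β hβ0 hβ1
    exact key12 L h hLip h0 h1 n hn t ht0 htn hmono hD hDeq M hM β hβ0 hβ1
  · intro N t hN ht0 htn hmono hD hDeq M hM hMtend β hβ0 hβ1 ε hε
    have h1β : 0 < 1 - β := by linarith
    have htend : Tendsto (fun m => (2:ℝ)^(1-β) * (1+(L:ℝ)) * (M m)^(1-β)) atTop (nhds 0) := by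
      have h1 : Tendsto (fun m => (M m)^(1-β)) atTop (nhds ((0:ℝ)^(1-β))) :=
        hMtend.rpow_const (Or.inr h1β.le)
      rw [Real.zero_rpow (by linarith)] at h1
      simpa using h1.const_mul ((2:ℝ)^(1-β) * (1+(L:ℝ)))
    have hev : ∀ᶠ m in atTop, (2:ℝ)^(1-β) * (1+(L:ℝ)) * (M m)^(1-β) < ε :=
      htend.eventually_lt_const hε
    obtain ⟨m₀, hm₀⟩ := eventually_atTop.mp hev
    refine ⟨m₀, fun m hm s hs u hu hsu => ?_⟩
    calc |(hD m u - u) - (hD m s - s)|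
        ≤ (2:ℝ)^(1-β) * (1+(L:ℝ)) * (M m)^(1-β) * |u - s|^β :=
          key12 L h hLip h0 h1 (N m) (hN m) (t m) (ht0 m) (htn m) (hmono m) (hD m)
            (hDeq m) (M m) (hM m) β hβ0 hβ1 s hs u hu hsu
      _ ≤ ε * |u - s|^β :=
          mul_le_mul_of_nonneg_right (hm₀ m hm).le (Real.rpow_nonneg (abs_nonneg _) β)
end
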